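/- Any 2-dimensional subspace of the space of 3×3 complex antisymmetric matrices consists, apart from zero, entirely of matrices of rank 2, and is equivalent under the GL₃(ℂ)×GL₃(ℂ) action (left and right multiplication) to the pencil V_l spanned by E₁₂+E₂₁ and E₁₃+E₃₁. -/

import Mathlib

open Matrix

noncomputable def matF : Matrix (Fin 3) (Fin 3) ℂ := !![0,1,0; 1,0,0; 0,0,0]
noncomputable def matG : Matrix (Fin 3) (Fin 3) ℂ := !![0,0,1; 0,0,0; 1,0,0]

noncomputable def pencilVl : Submodule ℂ (Matrix (Fin 3) (Fin 3) ℂ) :=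
  Submodule.span ℂ {matF, matG}

def pencilEquiv (V W : Submodule ℂ (Matrix (Fin 3) (Fin 3) ℂ)) : Prop :=
  ∃ M N : Matrix (Fin 3) (Fin 3) ℂ, IsUnit M ∧ IsUnit N ∧
    W = V.map ((LinearMap.mulLeft ℂ M).comp (LinearMap.mulRight ℂ N))

noncomputable def skew (u : Fin 3 → ℂ) : Matrix (Fin 3) (Fin 3) ℂ :=
  !![0, -u 2, u 1; u 2, 0, -u 0; -u 1, u 0, 0]

lemma skew_conj (P : Matrix (Fin 3) (Fin 3) ℂ) (u : Fin 3 → ℂ) :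
    Pᵀ * skew (P.mulVec u) * P = P.det • skew u := by
  ext i j
  fin_cases i <;> fin_cases j <;>
    simp [skew, Matrix.mul_apply, Matrix.mulVec, dotProduct,
      Fin.sum_univ_three, Matrix.det_fin_three, Matrix.smul_apply] <;> ring

lemma antisym_eq_skew (A : Matrix (Fin 3) (Fin 3) ℂ) (h : Aᵀ = -A) :
    A = skew ![A 2 1, A 0 2, A 1 0] := by
  have h' : ∀ i j, A j i = -A i j := fun i j => by
    have := congrFun (congrFun h i) j
    simpa using this
  ext i j
  fin_cases i <;> fin_cases j <;> simp [skew] <;>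
    first
      | rfl
      | linear_combination (h' 0 0) / 2
      | linear_combination (h' 1 1) / 2
      | linear_combination (h' 2 2) / 2
      | linear_combination h' 1 0
      | linear_combination h' 2 1
      | linear_combination h' 0 2

lemma skew_zero : skew 0 = 0 := by
  ext i j
  fin_cases i <;> fin_cases j <;>
    simp [skew, Matrix.vecHead, Matrix.vecTail]

lemma skew_smul_add (s t : ℂ) (u v : Fin 3 → ℂ) :
    skew (s • u + t • v) = s • skew u + t • skew v := by
  ext i j
  fin_cases i <;> fin_cases j <;> simp [skew] <;> ring

lemma rank_skew (u : Fin 3 → ℂ) (hu : u ≠ 0) : (skew u).rank = 2 := by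
  have hker : LinearMap.ker (skew u).mulVecLin = Submodule.span ℂ {u} := by
    ext x
    simp only [LinearMap.mem_ker, Matrix.mulVecLin_apply, Submodule.mem_span_singleton]
    constructor
    · intro hx
      have e0 := congrFun hx 0
      have e1 := congrFun hx 1
      have e2 := congrFun hx 2
      simp [skew, Matrix.mulVec, dotProduct, Fin.sum_univ_three] at e0 e1 e2
      by_cases h0 : u 0 ≠ 0
      · refine ⟨x 0 / u 0, funext fun j => ?_⟩
        fin_cases j
        · show x 0 / u 0 * u 0 = x 0; field_simp
        · show x 0 / u 0 * u 1 = x 1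
          rw [div_mul_eq_mul_div, div_eq_iff h0]; linear_combination -e2
        · show x 0 / u 0 * u 2 = x 2
          rw [div_mul_eq_mul_div, div_eq_iff h0]; linear_combination e1
      by_cases h1 : u 1 ≠ 0
      · refine ⟨x 1 / u 1, funext fun j => ?_⟩
        fin_cases j
        · show x 1 / u 1 * u 0 = x 0
          rw [div_mul_eq_mul_div, div_eq_iff h1]; linear_combination e2
        · show x 1 / u 1 * u 1 = x 1; field_simp
        · show x 1 / u 1 * u 2 = x 2
          rw [div_mul_eq_mul_div, div_eq_iff h1]; linear_combination -e0
      have h2 : u 2 ≠ 0 := by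
        push_neg at h0 h1
        intro h2
        apply hu
        funext j; fin_cases j <;> assumption
      refine ⟨x 2 / u 2, funext fun j => ?_⟩
      fin_cases j
      · show x 2 / u 2 * u 0 = x 0
        rw [div_mul_eq_mul_div, div_eq_iff h2]; linear_combination -e1
      · show x 2 / u 2 * u 1 = x 1
        rw [div_mul_eq_mul_div, div_eq_iff h2]; linear_combination e0
      · show x 2 / u 2 * u 2 = x 2; field_simp
    · rintro ⟨c, rfl⟩
      funext j
      fin_cases j <;>
        simp [skew, Matrix.mulVec, dotProduct, Fin.sum_univ_three] <;> ring
  have h1 : Module.finrank ℂ (LinearMap.ker (skew u).mulVecLin) = 1 := by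
    rw [hker]; exact finrank_span_singleton hu
  have h2 := LinearMap.finrank_range_add_finrank_ker (skew u).mulVecLin
  rw [h1, Module.finrank_pi] at h2
  simp only [Fintype.card_fin] at h2
  have h3 : (skew u).rank = Module.finrank ℂ (LinearMap.range (skew u).mulVecLin) := rfl
  omega

/-- extend a linearly independent pair to an invertible matrix of columns -/
lemma exists_unit_cols (a bb : Fin 3 → ℂ) (hpair : LinearIndependent ℂ ![a, bb]) :
    ∃ P : Matrix (Fin 3) (Fin 3) ℂ, IsUnit P ∧
      P.mulVec ![1,0,0] = a ∧ P.mulVec ![0,1,0] = bb := by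
  have hne : Submodule.span ℂ (Set.range ![a, bb]) ≠ ⊤ := by
    intro htop
    have h : Module.finrank ℂ (Submodule.span ℂ (Set.range ![a, bb])) ≤ 2 := by
      have h := finrank_range_le_card (R := ℂ) ![a, bb]
      rw [Set.finrank] at h
      simpa using h
    rw [htop, finrank_top, Module.finrank_pi] at h
    simp at h
  obtain ⟨c, hc⟩ : ∃ c, c ∉ Submodule.span ℂ (Set.range ![a, bb]) := by
    by_contra h
    push_neg at h
    exact hne (Submodule.eq_top_iff'.mpr h)
  have habc : (![a, bb, c] : Fin 3 → Fin 3 → ℂ) = Fin.snoc ![a, bb] c := by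
    funext j
    fin_cases j <;> simp [Fin.snoc] <;> rfl
  have hli3 : LinearIndependent ℂ ![a, bb, c] := by
    rw [habc]
    exact linearIndependent_fin_snoc.mpr ⟨hpair, hc⟩
  have hcard : Fintype.card (Fin 3) = Module.finrank ℂ (Fin 3 → ℂ) := by
    simp [Module.finrank_pi]
  let B3 : Module.Basis (Fin 3) ℂ (Fin 3 → ℂ) := basisOfLinearIndependentOfCardEqFinrank hli3 hcard
  let P : Matrix (Fin 3) (Fin 3) ℂ := (Pi.basisFun ℂ (Fin 3)).toMatrix ⇑B3
  have hPinv : IsUnit P := by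
    have := (Pi.basisFun ℂ (Fin 3)).invertibleToMatrix B3
    exact isUnit_of_invertible P
  have hP : ∀ i j, P i j = ![a, bb, c] j i := fun i j => by
    simp [P, Module.Basis.toMatrix_apply, B3, coe_basisOfLinearIndependentOfCardEqFinrank]
  refine ⟨P, hPinv, ?_, ?_⟩
  · funext i
    simp [Matrix.mulVec, dotProduct, Fin.sum_univ_three, hP]
  · funext i
    simp [Matrix.mulVec, dotProduct, Fin.sum_univ_three, hP]

lemma concrete_F :
    (!![0,0,1; 0,-1,0; 1,0,0] : Matrix (Fin 3) (Fin 3) ℂ) * skew ![1,0,0] *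
      !![0,0,-1; 0,1,0; 1,0,0] = matF := by
  ext i j
  fin_cases i <;> fin_cases j <;>
    simp [skew, matF, Matrix.mul_apply, Fin.sum_univ_three, Matrix.vecHead, Matrix.vecTail]

lemma concrete_G :
    (!![0,0,1; 0,-1,0; 1,0,0] : Matrix (Fin 3) (Fin 3) ℂ) * skew ![0,1,0] *
      !![0,0,-1; 0,1,0; 1,0,0] = matG := by
  ext i j
  fin_cases i <;> fin_cases j <;>
    simp [skew, matG, Matrix.mul_apply, Fin.sum_univ_three, Matrix.vecHead, Matrix.vecTail]

/-- Any 2-dimensional space of antisymmetric `3×3` complex matrices consists, apart from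
zero, of matrices of rank `2`, and it is `GL₃(ℂ) × GL₃(ℂ)`-equivalent to the model pencil
`V_l`. -/
theorem stmt_9 (V : Submodule ℂ (Matrix (Fin 3) (Fin 3) ℂ))
    (hdim : Module.finrank ℂ V = 2)
    (hanti : ∀ A ∈ V, Aᵀ = -A) :
    (∀ A ∈ V, A ≠ 0 → A.rank = 2) ∧ pencilEquiv V pencilVl := by
  constructor
  · intro A hA hA0
    have hsk := antisym_eq_skew A (hanti A hA)
    have hu : (![A 2 1, A 0 2, A 1 0] : Fin 3 → ℂ) ≠ 0 := by
      intro h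
      rw [h, skew_zero] at hsk
      exact hA0 hsk
    rw [hsk]
    exact rank_skew _ hu
  · -- get a basis of V
    have : FiniteDimensional ℂ V := FiniteDimensional.finiteDimensional_submodule V
    let b : Module.Basis (Fin 2) ℂ V := Module.finBasisOfFinrankEq ℂ V hdim
    set A : Matrix (Fin 3) (Fin 3) ℂ := (b 0 : Matrix (Fin 3) (Fin 3) ℂ) with hAdef
    set B : Matrix (Fin 3) (Fin 3) ℂ := (b 1 : Matrix (Fin 3) (Fin 3) ℂ) with hBdef
    have hAV : A ∈ V := (b 0).2
    have hBV : B ∈ V := (b 1).2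
    have hspan : V = Submodule.span ℂ {A, B} := by
      have h1 : V = Submodule.map V.subtype (Submodule.span ℂ (Set.range ⇑b)) := by
        rw [b.span_eq, Submodule.map_subtype_top]
      rw [Submodule.map_span] at h1
      have h2 : V.subtype '' Set.range ⇑b = {A, B} := by
        ext x
        constructor
        · rintro ⟨y, ⟨i, rfl⟩, rfl⟩
          fin_cases i
          · left; rfl
          · right; rfl
        · rintro (rfl | rfl)
          · exact ⟨b 0, ⟨0, rfl⟩, rfl⟩
          · exact ⟨b 1, ⟨1, rfl⟩, rfl⟩
      rw [h2] at h1
      exact h1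
    have hind : ∀ s t : ℂ, s • A + t • B = 0 → s = 0 ∧ t = 0 := by
      intro s t hst
      have h0 : s • b 0 + t • b 1 = 0 := by
        apply Subtype.ext
        simpa using hst
      have := Fintype.linearIndependent_iff.mp b.linearIndependent ![s, t] (by
        simpa [Fin.sum_univ_two] using h0)
      exact ⟨this 0, this 1⟩
    -- vectors
    set av : Fin 3 → ℂ := ![A 2 1, A 0 2, A 1 0] with havdef
    set bv : Fin 3 → ℂ := ![B 2 1, B 0 2, B 1 0] with hbvdef
    have hAs : A = skew av := antisym_eq_skew A (hanti A hAV)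
    have hBs : B = skew bv := antisym_eq_skew B (hanti B hBV)
    have hpair : LinearIndependent ℂ ![av, bv] := by
      rw [LinearIndependent.pair_iff]
      intro s t hst
      have : s • A + t • B = 0 := by
        rw [hAs, hBs, ← skew_smul_add, hst, skew_zero]
      exact hind s t this
    obtain ⟨P, hPu, hPa, hPb⟩ := exists_unit_cols av bv hpair
    have hdet : P.det ≠ 0 := by
      have := (Matrix.isUnit_iff_isUnit_det P).mp hPu
      exact IsUnit.ne_zero this
    set M : Matrix (Fin 3) (Fin 3) ℂ := !![0,0,1; 0,-1,0; 1,0,0] with hMdef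
    set N : Matrix (Fin 3) (Fin 3) ℂ := !![0,0,-1; 0,1,0; 1,0,0] with hNdef
    set M₁ : Matrix (Fin 3) (Fin 3) ℂ := (P.det)⁻¹ • (M * Pᵀ) with hM₁def
    set N₁ : Matrix (Fin 3) (Fin 3) ℂ := P * N with hN₁def
    have hMu : IsUnit M₁ := by
      rw [Matrix.isUnit_iff_isUnit_det, hM₁def, Matrix.det_smul, Matrix.det_mul,
        Matrix.det_transpose, isUnit_iff_ne_zero]
      have hdM : M.det = 1 := by
        rw [hMdef]
        norm_num [Matrix.det_fin_three]
        show (1:ℂ) * 1 = 1; simp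
      rw [hdM]
      simp [hdet]
    have hNu : IsUnit N₁ := by
      rw [Matrix.isUnit_iff_isUnit_det, hN₁def, Matrix.det_mul, isUnit_iff_ne_zero]
      have hdN : N.det = 1 := by
        rw [hNdef]
        norm_num [Matrix.det_fin_three]
        show -((-1:ℂ) * 1) = 1; simp
      rw [hdN]
      simp [hdet]
    have key : ∀ (X : Matrix (Fin 3) (Fin 3) ℂ) (u : Fin 3 → ℂ),
        X = skew (P.mulVec u) → M₁ * X * N₁ = M * skew u * N := by
      intro X u hX
      calc M₁ * X * N₁ = (P.det)⁻¹ • ((M * Pᵀ) * X * (P * N)) := by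
            rw [hM₁def, hN₁def, Matrix.smul_mul, Matrix.smul_mul]
        _ = (P.det)⁻¹ • (M * (Pᵀ * X * P) * N) := by
            simp only [Matrix.mul_assoc]
        _ = (P.det)⁻¹ • (M * (P.det • skew u) * N) := by
            rw [hX, skew_conj]
        _ = ((P.det)⁻¹ * P.det) • (M * skew u * N) := by
            rw [Matrix.mul_smul, Matrix.smul_mul, smul_smul]
        _ = M * skew u * N := by
            rw [inv_mul_cancel₀ hdet, one_smul]
    have hMF : M₁ * A * N₁ = matF := by
      rw [key A ![1,0,0] (by rw [hPa]; exact hAs), concrete_F]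
    have hMG : M₁ * B * N₁ = matG := by
      rw [key B ![0,1,0] (by rw [hPb]; exact hBs), concrete_G]
    refine ⟨M₁, N₁, hMu, hNu, ?_⟩
    rw [hspan, Submodule.map_span, Set.image_pair]
    have hfA : (LinearMap.mulLeft ℂ M₁).comp (LinearMap.mulRight ℂ N₁) A = matF := by
      simp only [LinearMap.comp_apply, LinearMap.mulRight_apply, LinearMap.mulLeft_apply]
      rw [← Matrix.mul_assoc]; exact hMF
    have hfB : (LinearMap.mulLeft ℂ M₁).comp (LinearMap.mulRight ℂ N₁) B = matG := by
      simp only [LinearMap.comp_apply, LinearMap.mulRight_apply, LinearMap.mulLeft_apply]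
      rw [← Matrix.mul_assoc]; exact hMG
    rw [hfA, hfB]
    rfl
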